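/- arXiv:2007.13198 — 5 statements merged into one kernel-verified Lean document; each statement's English description precedes it below -/
import Mathlib

section
/- Let (L, ⊔, ⊓) be a lattice equipped with a binary operation * satisfying, for all x, y, z ∈ L, the identities z ⊔ y ≤ x * ((x ⊔ y) ⊓ (z ⊔ y)) and (x ⊔ y) ⊓ (x * y) = y. Then for all a, b ∈ L, a*b is the greatest element c of L satisfying (a ⊔ b) ⊓ c = b, i.e. L is sectionally pseudocomplemented with sectional pseudocomplementation *. -/
/-- A binary operation `star` makes the lattice `L` sectionally pseudocomplemented if
for all `a b`, `star a b` is the greatest element `c` with `(a ⊔ b) ⊓ c = b`. -/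
def IsSPLattice {L : Type*} [Lattice L] (star : L → L → L) : Prop :=
  ∀ a b : L, (a ⊔ b) ⊓ star a b = b ∧ ∀ c : L, (a ⊔ b) ⊓ c = b → c ≤ star a b

theorem stmt_1 {L : Type*} [Lattice L] (star : L → L → L)
    (h1 : ∀ x y z : L, z ⊔ y ≤ star x ((x ⊔ y) ⊓ (z ⊔ y)))
    (h2 : ∀ x y : L, (x ⊔ y) ⊓ star x y = y) :
    IsSPLattice star := by
  intro a b
  refine ⟨h2 a b, fun c hc => ?_⟩
  have hbc : b ≤ c := hc ▸ inf_le_right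
  have hcb : c ⊔ b = c := sup_eq_left.mpr hbc
  have := h1 a b c
  rw [hcb, hc] at this
  exact le_sup_left.trans (hcb ▸ this)
end

section
/- In a sectionally pseudocomplemented lattice (L, ⊔, ⊓, *), the term p(x, y, z) := ((x*y)*z) ⊓ ((z*y)*x) is a Maltsev term, i.e. p(x, x, z) = z and p(x, z, z) = x hold for all x, z ∈ L. -/
theorem stmt_2 {L : Type*} [Lattice L] (star : L → L → L) (h : IsSPLattice star)
    (p : L → L → L → L)
    (hp : ∀ x y z : L, p x y z = star (star x y) z ⊓ star (star z y) x) :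
    ∀ x z : L, p x x z = z ∧ p x z z = x := by
  -- basic fact: b ≤ star a b
  have hle : ∀ a b : L, b ≤ star a b := by
    intro a b
    exact (h a b).2 b (inf_eq_right.2 le_sup_right)
  -- key fact: a ⊔ b ≤ star (star a b) b
  have key : ∀ a b : L, a ⊔ b ≤ star (star a b) b := by
    intro a b
    apply (h (star a b) b).2
    have h1 : star a b ⊔ b = star a b := sup_eq_left.2 (hle a b)
    rw [h1, inf_comm]
    exact (h a b).1
  -- key fact: anything ≥ a is ≤ star a a
  have top : ∀ a c : L, a ≤ c → c ≤ star a a := by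
    intro a c hac
    exact (h a a).2 c (by rw [sup_idem]; exact inf_eq_left.2 hac)
  intro x z
  constructor
  · rw [hp]
    apply le_antisymm
    · -- star (star x x) z ⊓ star (star z x) x ≤ z
      have h2 : star (star z x) x ≤ star x x := top x _ (hle (star z x) x)
      calc star (star x x) z ⊓ star (star z x) x
          ≤ star (star x x) z ⊓ (star x x ⊔ z) :=
            inf_le_inf_left _ (h2.trans le_sup_left)
        _ = z := by rw [inf_comm]; exact (h (star x x) z).1
    · exact le_inf (hle _ z) (le_sup_left.trans (key z x))
  · rw [hp]
    apply le_antisymm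
    · have h2 : star (star x z) z ≤ star z z := top z _ (hle (star x z) z)
      calc star (star x z) z ⊓ star (star z z) x
          ≤ (star z z ⊔ x) ⊓ star (star z z) x :=
            inf_le_inf_right _ (h2.trans le_sup_left)
        _ = x := (h (star z z) x).1
    · exact le_inf (le_sup_left.trans (key x z)) (hle _ x)
end

section
/- Let (L, ⊔, ⊓, *) be a nonempty sectionally pseudocomplemented lattice with greatest element 1 and let Θ be a congruence on L. Then the congruence class [1]Θ is a filter of L, and for all x, y ∈ L, (x, y) ∈ Θ if and only if x*y ∈ [1]Θ and y*x ∈ [1]Θ; i.e. Φ([1]Θ) = Θ. -/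
/-- A congruence on a sectionally pseudocomplemented lattice: an equivalence relation
compatible with `⊔`, `⊓` and `star`. -/
def IsSPCong {L : Type*} [Lattice L] (star : L → L → L) (Θ : L → L → Prop) : Prop :=
  Equivalence Θ ∧ ∀ a b c d : L, Θ a b → Θ c d →
    Θ (a ⊔ c) (b ⊔ d) ∧ Θ (a ⊓ c) (b ⊓ d) ∧ Θ (star a c) (star b d)

/-- A filter of a sectionally pseudocomplemented lattice with greatest element `one`. -/
def IsSPFilter {L : Type*} [Lattice L] (star : L → L → L) (one : L) (F : Set L) : Prop :=
  one ∈ F ∧ ∀ x y z : L, star x y ∈ F → star y x ∈ F →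
    star (x ⊔ z) (y ⊔ z) ∈ F ∧ star (x ⊓ z) (y ⊓ z) ∈ F ∧
    star (star x z) (star y z) ∈ F ∧ star (star z x) (star z y) ∈ F

/-- `Φ(M)`: the relation consisting of all pairs `(x, y)` with `star x y ∈ M` and `star y x ∈ M`. -/
def PhiRel {L : Type*} (star : L → L → L) (M : Set L) : L → L → Prop :=
  fun x y => star x y ∈ M ∧ star y x ∈ M

/-- The congruence class of `one` under `Θ`. -/
def oneClass {L : Type*} (Θ : L → L → Prop) (one : L) : Set L := {x : L | Θ x one}

theorem stmt_6 {L : Type*} [Lattice L] (star : L → L → L) (h : IsSPLattice star)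
    (one : L) (hone : ∀ x : L, x ≤ one)
    (Θ : L → L → Prop) (hΘ : IsSPCong star Θ) :
    IsSPFilter star one (oneClass Θ one) ∧
    ∀ x y : L, Θ x y ↔ (star x y ∈ oneClass Θ one ∧ star y x ∈ oneClass Θ one) := by

  obtain ⟨hE, hC⟩ := hΘ
  have hss : ∀ a : L, star a a = one := by
    intro a
    have h1 := (h a a).1
    have h2 := (h a a).2 one (by rw [sup_idem, inf_eq_left.mpr (hone a)])
    exact le_antisymm (hone _) h2
  have fwd : ∀ x y : L, Θ x y → Θ (star x y) one := by
    intro x y hxy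
    have := (hC x y y y hxy (hE.refl y)).2.2
    rwa [hss y] at this
  have bwd : ∀ x y : L, Θ (star x y) one → Θ (star y x) one → Θ x y := by
    intro x y h1 h2
    have hy : Θ y (x ⊔ y) := by
      have := (hC (x ⊔ y) (x ⊔ y) (star x y) one (hE.refl _) h1).2.1
      rwa [(h x y).1, inf_eq_left.mpr (hone _)] at this
    have hx : Θ x (y ⊔ x) := by
      have := (hC (y ⊔ x) (y ⊔ x) (star y x) one (hE.refl _) h2).2.1
      rwa [(h y x).1, inf_eq_left.mpr (hone _)] at this
    rw [sup_comm] at hx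
    exact hE.trans hx (hE.symm hy)
  constructor
  · refine ⟨hE.refl one, ?_⟩
    intro x y z h1 h2
    have hxy : Θ x y := bwd x y h1 h2
    exact ⟨fwd _ _ (hC x y z z hxy (hE.refl z)).1,
      fwd _ _ (hC x y z z hxy (hE.refl z)).2.1,
      fwd _ _ (hC x y z z hxy (hE.refl z)).2.2,
      fwd _ _ (hC z z x y (hE.refl z) hxy).2.2⟩
  · intro x y
    exact ⟨fun hxy => ⟨fwd x y hxy, fwd y x (hE.symm hxy)⟩, fun ⟨h1, h2⟩ => bwd x y h1 h2⟩
end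

section
/- Let (L, ⊔, ⊓, *) be a nonempty sectionally pseudocomplemented lattice with greatest element 1 and F ⊆ L. Then F is a filter of L if and only if F is closed with respect to the ideal terms t₁, …, t₅, i.e.: 1 ∈ F, and for all x₁, x₂, x₃ ∈ L and all y₁, y₂ ∈ F the following elements lie in F: t₂ = (((x₁ ⊔ x₂) ⊓ (y₁*x₂) ⊓ y₂) ⊔ x₃)*(x₂ ⊔ x₃), t₃ = (((x₁ ⊔ x₂) ⊓ (y₁*x₂) ⊓ y₂) ⊓ x₃)*(x₂ ⊓ x₃), t₄ = (((x₁ ⊔ x₂) ⊓ (y₁*x₂) ⊓ y₂)*x₃)*(x₂*x₃), and t₅ = (x₃*x₁)*(x₃*((x₁ ⊔ x₂) ⊓ (y₂*x₁) ⊓ y₁)). -/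
theorem stmt_12 {L : Type*} [Lattice L] (star : L → L → L) (h : IsSPLattice star)
    (one : L) (hone : ∀ x : L, x ≤ one) (F : Set L) :
    IsSPFilter star one F ↔
      (one ∈ F ∧
       ∀ x₁ x₂ x₃ : L, ∀ y₁ ∈ F, ∀ y₂ ∈ F,
         star ((x₁ ⊔ x₂) ⊓ star y₁ x₂ ⊓ y₂ ⊔ x₃) (x₂ ⊔ x₃) ∈ F ∧
         star ((x₁ ⊔ x₂) ⊓ star y₁ x₂ ⊓ y₂ ⊓ x₃) (x₂ ⊓ x₃) ∈ F ∧
         star (star ((x₁ ⊔ x₂) ⊓ star y₁ x₂ ⊓ y₂) x₃) (star x₂ x₃) ∈ F ∧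
         star (star x₃ x₁) (star x₃ ((x₁ ⊔ x₂) ⊓ star y₂ x₁ ⊓ y₁)) ∈ F) := by
  have le_star : ∀ a b : L, b ≤ star a b := fun a b =>
    (h a b).2 b (inf_eq_right.2 le_sup_right)
  have star_of_le : ∀ a b : L, a ≤ b → star a b = one := by
    intro a b hab
    refine le_antisymm (hone _) ((h a b).2 one ?_)
    rw [sup_eq_right.2 hab, inf_eq_left.2 (hone b)]
  have star_one_left : ∀ q : L, star one q = q := by
    intro q
    have h1 := (h one q).1
    rwa [sup_eq_left.2 (hone q), inf_eq_right.2 (hone _)] at h1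
  constructor
  · rintro ⟨h1, hcl⟩
    refine ⟨h1, ?_⟩
    intro x₁ x₂ x₃ y₁ hy₁ y₂ hy₂
    -- upward closure of F
    have up : ∀ p q : L, p ∈ F → p ≤ q → q ∈ F := by
      intro p q hp hpq
      have h2 := (hcl one p q (by rwa [star_one_left]) (by rw [star_of_le p one (hone p)]; exact h1)).1
      rwa [sup_eq_left.2 (hone q), sup_eq_right.2 hpq, star_one_left] at h2
    -- key lemma
    have key : ∀ u v y y' : L, y ∈ F → y' ∈ F →
        star ((u ⊔ v) ⊓ star y v ⊓ y') v ∈ F ∧ star v ((u ⊔ v) ⊓ star y v ⊓ y') ∈ F := by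
      intro u v y y' hy hy'
      set s := star y v with hs
      set A := (u ⊔ v) ⊓ s with hA
      set e := A ⊓ y' with he
      have hvs : v ≤ s := le_star y v
      have hvA : v ≤ A := le_inf le_sup_right hvs
      have hsv : star s v ∈ F := by
        have h2 := (hcl y one v (by rw [star_of_le y one (hone y)]; exact h1)
          (by rwa [star_one_left])).2.2.1
        rwa [star_one_left] at h2
      have hAv : star A v ∈ F := by
        have h2 := (hcl s v (u ⊔ v) hsv (by rw [star_of_le v s hvs]; exact h1)).2.1
        rwa [inf_comm s (u ⊔ v), inf_eq_left.2 (le_sup_right : v ≤ u ⊔ v)] at h2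
      have heA : e ⊔ v ≤ A := sup_le inf_le_left hvA
      have hAle : star A v ≤ star e v := by
        apply (h e v).2
        apply le_antisymm
        · calc (e ⊔ v) ⊓ star A v ≤ A ⊓ star A v := inf_le_inf_right _ heA
            _ = v := by
              have h3 := (h A v).1
              rwa [sup_eq_left.2 hvA] at h3
        · exact le_inf le_sup_right (le_star A v)
      have hev : star e v ∈ F := up _ _ hAv hAle
      have hy'le : y' ≤ star v e := by
        apply (h v e).2
        apply le_antisymm
        · exact le_inf (le_trans inf_le_left (sup_le hvA inf_le_left)) inf_le_right
        · exact le_inf le_sup_right inf_le_right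
      have hve : star v e ∈ F := up _ _ hy' hy'le
      exact ⟨hev, hve⟩
    obtain ⟨hev, hve⟩ := key x₁ x₂ y₁ y₂ hy₁ hy₂
    have h2 := hcl _ x₂ x₃ hev hve
    obtain ⟨he'x, hxe'⟩ := key x₂ x₁ y₂ y₁ hy₂ hy₁
    have h3 := hcl x₁ _ x₃ hxe' he'x
    rw [sup_comm x₂ x₁] at h3
    exact ⟨h2.1, h2.2.1, h2.2.2.1, h3.2.2.2⟩
  · rintro ⟨h1, ht⟩
    refine ⟨h1, ?_⟩
    intro x y z hxy hyx
    have iden : ∀ a b : L, (a ⊔ b) ⊓ star (star a b) b ⊓ star b a = a := by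
      intro a b
      apply le_antisymm
      · calc (a ⊔ b) ⊓ star (star a b) b ⊓ star b a ≤ (a ⊔ b) ⊓ star b a :=
            inf_le_inf_right _ inf_le_left
          _ = a := by
            have h3 := (h b a).1
            rwa [sup_comm b a] at h3
      · refine le_inf (le_inf le_sup_left ?_) ?_
        · refine le_trans le_sup_left ((h (star a b) b).2 (a ⊔ b) ?_)
          rw [sup_eq_left.2 (le_star a b), inf_comm]
          exact (h a b).1
        · exact (h b a).2 a (inf_eq_right.2 le_sup_right)
    have id2 : (x ⊔ y) ⊓ star (star y x) x ⊓ star x y = y := by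
      rw [sup_comm x y]; exact iden y x
    have H := ht x y z (star x y) hxy (star y x) hyx
    rw [iden x y, id2] at H
    exact H
end

section
/- In a sectionally pseudocomplemented lattice (L, ⊔, ⊓, *), the term q(x, y, z) := (x ⊔ z) ⊓ ((x*y)*z) ⊓ (y*x) is a Maltsev term, i.e. q(x, x, z) = z and q(x, z, z) = x hold for all x, z ∈ L. -/
theorem stmt_13 {L : Type*} [Lattice L] (star : L → L → L) (h : IsSPLattice star)
    (q : L → L → L → L)
    (hq : ∀ x y z : L, q x y z = (x ⊔ z) ⊓ star (star x y) z ⊓ star y x) :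
    ∀ x z : L, q x x z = z ∧ q x z z = x := by
  have top : ∀ c w : L, c ≤ star w w := by
    intro c w
    have := (h w w).2 (w ⊔ c) (by simp)
    exact le_trans le_sup_right this
  intro x z
  constructor
  · rw [hq]
    have h1 := (h (star x x) z).1
    rw [sup_eq_left.mpr (top z x)] at h1
    have hs : star (star x x) z = z := by
      rw [inf_eq_right.mpr (top (star (star x x) z) x)] at h1
      exact h1
    rw [hs]
    rw [inf_eq_right.mpr (le_sup_right : z ≤ x ⊔ z)]
    exact inf_eq_left.mpr (top z x)
  · rw [hq]
    set a := star x z with ha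
    have h1 := (h x z).1
    have hza : z ≤ a := by rw [← h1]; exact inf_le_right
    have hle : x ⊔ z ≤ star a z := by
      apply (h a z).2
      rw [sup_eq_left.mpr hza, inf_comm]
      exact h1
    rw [inf_eq_left.mpr hle]
    have h2 := (h z x).1
    rw [sup_comm] at h2
    exact h2
end
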